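/- Suppose u_0 satisfies the sigma-Painlevé II equation (u_0'')^2 + 4u_0'((u_0')^2 − r u_0' + u_0) = 0 on an interval where u_0 is four times differentiable and u_0'' never vanishes. Define u_1(r) = −(2^{2/3}/10)·(u_0''(r) + (2u_0(r) + r^2/6) u_0'(r) + (r/3) u_0(r)). Then u_1 satisfies the linear ODE A_2(r) u_1'' + B_2(r) u_1' + C_2(r) u_1 = D_2(r), where A_2(r) = u_0''(r), B_2(r) = 2u_0(r) − 4r u_0'(r) + 6(u_0'(r))^2, C_2(r) = 2u_0'(r), and D_2(r) = −(1/(3·2^{1/3}))·(u_0'(r)(r^2 u_0'(r) + 6 u_0(r) u_0'(r) − 2r u_0(r) + 3 u_0''(r)) − 2(u_0(r))^2). -/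

import Mathlib

/-- If `u₀` solves the sigma-Painlevé II equation on an open set where it is four times
differentiable and `u₀''` never vanishes, then
`u₁ = −(2^{2/3}/10)(u₀'' + (2u₀ + r²/6)u₀' + (r/3)u₀)` satisfies the linear ODE
`A₂ u₁'' + B₂ u₁' + C₂ u₁ = D₂`. -/
theorem sigmaPII_correction_ODE (s : Set ℝ) (hs : IsOpen s)
    (u0 u0' u0'' u0''' u0'''' u1 u1' u1'' : ℝ → ℝ)
    (hu0 : ∀ r ∈ s, HasDerivAt u0 (u0' r) r)
    (hu0' : ∀ r ∈ s, HasDerivAt u0' (u0'' r) r)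
    (hu0'' : ∀ r ∈ s, HasDerivAt u0'' (u0''' r) r)
    (hu0''' : ∀ r ∈ s, HasDerivAt u0''' (u0'''' r) r)
    (hu1 : ∀ r ∈ s, HasDerivAt u1 (u1' r) r)
    (hu1' : ∀ r ∈ s, HasDerivAt u1' (u1'' r) r)
    (hne : ∀ r ∈ s, u0'' r ≠ 0)
    (heq : ∀ r ∈ s, (u0'' r) ^ 2 + 4 * u0' r * ((u0' r) ^ 2 - r * u0' r + u0 r) = 0)
    (hdef : ∀ r ∈ s, u1 r
      = -((2 : ℝ) ^ ((2 : ℝ) / 3) / 10)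
          * (u0'' r + (2 * u0 r + r ^ 2 / 6) * u0' r + (r / 3) * u0 r)) :
    ∀ r ∈ s,
      u0'' r * u1'' r
        + (2 * u0 r - 4 * r * u0' r + 6 * (u0' r) ^ 2) * u1' r
        + 2 * u0' r * u1 r
      = -(1 / (3 * (2 : ℝ) ^ ((1 : ℝ) / 3)))
          * (u0' r * (r ^ 2 * u0' r + 6 * u0 r * u0' r - 2 * r * u0 r + 3 * u0'' r)
              - 2 * (u0 r) ^ 2) := by
  -- third derivative relation
  have h3 : ∀ r ∈ s, u0''' r = -2*u0 r + 4*r*u0' r - 6*(u0' r)^2 := by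
    intro r hr
    have hq2 : HasDerivAt (fun x => (u0'' x)^2) (2*u0'' r*u0''' r) r := by
      simpa using (hu0'' r hr).fun_pow 2
    have hq1 : HasDerivAt (fun x => (u0' x)^2) (2*u0' r*u0'' r) r := by
      simpa using (hu0' r hr).fun_pow 2
    have hF : HasDerivAt
        (fun x => (u0'' x)^2 + 4*u0' x*((u0' x)^2 - x*u0' x + u0 x))
        (2*u0'' r*u0''' r
          + ((4*u0'' r) * ((u0' r)^2 - r*u0' r + u0 r)
            + (4*u0' r) * ((2*u0' r*u0'' r - (1*u0' r + r*u0'' r)) + u0' r))) r :=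
      hq2.add ((HasDerivAt.const_mul 4 (hu0' r hr)).mul
        (((hq1.sub ((hasDerivAt_id' r).mul (hu0' r hr)))).add (hu0 r hr)))
    have hF0 : HasDerivAt
        (fun x => (u0'' x)^2 + 4*u0' x*((u0' x)^2 - x*u0' x + u0 x)) 0 r :=
      (hasDerivAt_const r 0).congr_of_eventuallyEq
        (by filter_upwards [hs.mem_nhds hr] with x hx using heq x hx)
    have hD := hF.unique hF0
    have key : 2*u0'' r * (u0''' r - (-2*u0 r + 4*r*u0' r - 6*(u0' r)^2)) = 0 := by
      linear_combination hD
    have h2 : (2:ℝ)*u0'' r ≠ 0 := mul_ne_zero two_ne_zero (hne r hr)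
    have := (mul_eq_zero.mp key).resolve_left h2
    linarith [this]
  -- first derivative of u1
  have hB : ∀ r ∈ s, u1' r = -((2:ℝ)^((2:ℝ)/3)/10)
      * ((-5/3)*u0 r + (14/3)*(r*u0' r) - 4*(u0' r)^2 + (2*u0 r + r^2/6)*u0'' r) := by
    intro r hr
    have hp : HasDerivAt (fun x : ℝ => x^2) (2*r) r := by simpa using hasDerivAt_pow 2 r
    have hG : HasDerivAt
        (fun x => -((2:ℝ)^((2:ℝ)/3)/10)
          * (u0'' x + (2 * u0 x + x ^ 2 / 6) * u0' x + (x / 3) * u0 x))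
        (-((2:ℝ)^((2:ℝ)/3)/10)
          * ((u0''' r + ((2*u0' r + 2*r/6) * u0' r + (2*u0 r + r^2/6) * u0'' r))
            + ((1/3) * u0 r + (r/3) * u0' r))) r :=
      HasDerivAt.const_mul _
        (((hu0'' r hr).add
          (((HasDerivAt.const_mul 2 (hu0 r hr)).add (hp.div_const 6)).mul (hu0' r hr))).add
          (((hasDerivAt_id' r).div_const 3).mul (hu0 r hr)))
    have hu1G : HasDerivAt u1 _ r := hG.congr_of_eventuallyEq
      (by filter_upwards [hs.mem_nhds hr] with x hx using hdef x hx)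
    have h := (hu1 r hr).unique hu1G
    rw [h]
    linear_combination (-((2:ℝ)^((2:ℝ)/3)/10)) * h3 r hr
  -- now the main computation
  intro r hr
  have hp : HasDerivAt (fun x : ℝ => x^2) (2*r) r := by simpa using hasDerivAt_pow 2 r
  have hq1 : HasDerivAt (fun x => (u0' x)^2) (2*u0' r*u0'' r) r := by
    simpa using (hu0' r hr).fun_pow 2
  have hV : HasDerivAt
      (fun x => -((2:ℝ)^((2:ℝ)/3)/10)
        * ((-5/3)*u0 x + (14/3)*(x*u0' x) - 4*(u0' x)^2 + (2*u0 x + x^2/6)*u0'' x))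
      (-((2:ℝ)^((2:ℝ)/3)/10)
        * ((((-5/3)*u0' r + (14/3)*(1*u0' r + r*u0'' r)) - 4*(2*u0' r*u0'' r))
          + ((2*u0' r + 2*r/6) * u0'' r + (2*u0 r + r^2/6) * u0''' r))) r :=
    HasDerivAt.const_mul _
      ((((HasDerivAt.const_mul (-5/3) (hu0 r hr)).add
          (HasDerivAt.const_mul ((14:ℝ)/3) ((hasDerivAt_id' r).mul (hu0' r hr)))).sub
        (HasDerivAt.const_mul 4 hq1)).add
        (((HasDerivAt.const_mul 2 (hu0 r hr)).add (hp.div_const 6)).mul (hu0'' r hr)))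
  have hu1'V : HasDerivAt u1' _ r := hV.congr_of_eventuallyEq
    (by filter_upwards [hs.mem_nhds hr] with x hx using hB x hx)
  have e3 := (hu1' r hr).unique hu1'V
  have ha2 : (2:ℝ)^((2:ℝ)/3) = ((2:ℝ)^((1:ℝ)/3))^2 := by
    rw [← Real.rpow_natCast ((2:ℝ)^((1:ℝ)/3)) 2, ← Real.rpow_mul (by norm_num)]
    norm_num
  have hb3 : ((2:ℝ)^((1:ℝ)/3))^3 = 2 := by
    rw [← Real.rpow_natCast ((2:ℝ)^((1:ℝ)/3)) 3, ← Real.rpow_mul (by norm_num)]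
    norm_num
  have key : (1:ℝ)/(3*(2:ℝ)^((1:ℝ)/3)) = ((2:ℝ)^((1:ℝ)/3))^2/6 := by
    rw [div_eq_div_iff (by positivity) (by norm_num)]
    linear_combination (-3:ℝ)*hb3
  rw [hdef r hr, hB r hr, e3, h3 r hr, key, ha2]
  linear_combination (-((((2:ℝ)^((1:ℝ)/3))^2)/10)*(5*r - 6*u0' r)) * heq r hr
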